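/- arXiv:0907.2470 — 2 statements merged into one kernel-verified Lean document; each statement's English description precedes it below -/
import Mathlib

section
/- For every m ≥ 0, the function φ_m is convex, and φ_m is Lipschitz with Lipschitz constant (4m+4)/3 (i.e. |φ_m(s) − φ_m(t)| ≤ ((4m+4)/3)·|s − t| for all s, t ∈ I). -/
open scoped BigOperators

noncomputable section

attribute [local instance] Classical.propDecidable

/-- `I`: the set of dyadic rationals in `[0,1]`. -/
def dyadicI : Set ℚ := {t | 0 ≤ t ∧ t ≤ 1 ∧ ∃ i n : ℕ, t = (i : ℚ) / 2 ^ n}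

/-- `X` is the ℚ-vector space of functions `I → ℚ`. -/
abbrev X : Type := dyadicI → ℚ

lemma dyadicI_mem {i n : ℕ} (h : i ≤ 2 ^ n) : (i : ℚ) / 2 ^ n ∈ dyadicI := by
  refine ⟨by positivity, ?_, i, n, rfl⟩
  rw [div_le_one (by positivity)]
  exact_mod_cast h

lemma zero_mem_dyadicI : (0 : ℚ) ∈ dyadicI := by
  simpa using dyadicI_mem (i := 0) (n := 0) (by norm_num)

lemma one_mem_dyadicI : (1 : ℚ) ∈ dyadicI := by
  simpa using dyadicI_mem (i := 1) (n := 0) (by norm_num)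

lemma half_mem_dyadicI : (1 / 2 : ℚ) ∈ dyadicI := by
  have := dyadicI_mem (i := 1) (n := 1) (by norm_num)
  norm_num at this ⊢
  exact this

/-- Evaluation of `α : X` at a rational, extended by `0` off `I`. -/
def evI (α : X) (t : ℚ) : ℚ := if h : t ∈ dyadicI then α ⟨t, h⟩ else 0

/-- The map `T₀ : X → X`, `(T₀ α)(t) = α (t/2)`. -/
def T0 (α : X) : X := fun t => evI α (t.1 / 2)

/-- The map `T₁ : X → X`, `(T₁ α)(t) = α ((1+t)/2)`. -/
def T1 (α : X) : X := fun t => evI α ((1 + t.1) / 2)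

/-- Auxiliary recursion (on the exponent of the denominator) defining `α # β`. -/
def hashAux : ℕ → X → X → ℚ → ℚ
  | 0, α, β, t =>
      if t = 0 then 0 else (evI α 1 - evI α 0) * (evI β 1 - evI β 0)
  | n + 1, α, β, t =>
      if t ≤ 1 / 2 then
        hashAux n (T0 α) (T0 β) (2 * t) + hashAux n (T1 α) (T1 β) (2 * t)
      else
        hashAux n (T0 α) (T0 β) 1 + hashAux n (T1 α) (T1 β) 1 +
          hashAux n (T0 α) (T1 β) (2 * t - 1) + hashAux n (T1 α) (T0 β) (2 * t - 1)

/-- The product `α # β` on `X`. -/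
def hash (α β : X) : X := fun t => hashAux (padicValNat 2 t.1.den) α β t.1

/-- The element `t ↦ t` of `X`. -/
def tId : X := fun t => t.1

/-- The element `ε : t ↦ t − t²` of `X`. -/
def epsX : X := fun t => t.1 - t.1 ^ 2

/-- The constant function `1` in `X`. -/
def oneX : X := fun _ => (1 : ℚ)

/-- Convexity: `2α(i/q) ≥ α((i−1)/q) + α((i+1)/q)` for all powers of two `q = 2^n`, `0 < i < q`. -/
def ConvexX (α : X) : Prop :=
  ∀ n i : ℕ, 0 < i → i < 2 ^ n →
    evI α (((i : ℚ) - 1) / 2 ^ n) + evI α (((i : ℚ) + 1) / 2 ^ n)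
      ≤ 2 * evI α ((i : ℚ) / 2 ^ n)

/-- `α` is Lipschitz with constant `m`. -/
def LipschitzQ (m : ℚ) (α : X) : Prop :=
  ∀ s t : dyadicI, |α s - α t| ≤ m * |s.1 - t.1|

/-- The point `2^{-n}` of `I`. -/
def invPow (n : ℕ) : dyadicI :=
  ⟨1 / 2 ^ n, by simpa using dyadicI_mem (i := 1) (n := n) Nat.one_le_two_pow⟩

/-- `μ` is the Hilbert–Kunz multiplicity of `α`, i.e. `μ = lim 2^n α(2^{-n})`. -/
def IsHKmu (α : X) (μ : ℝ) : Prop :=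
  Filter.Tendsto (fun n : ℕ => ((2 ^ n * α (invPow n) : ℚ) : ℝ)) Filter.atTop (nhds μ)

/-- The series `S_α = Σ α(2^{-n}) (2w)^n = Σ (2^n α(2^{-n})) w^n`. -/
def hkSeries (α : X) : PowerSeries ℚ := PowerSeries.mk fun n => 2 ^ n * α (invPow n)

/-- Auxiliary recursion defining the functions `φ_m`. -/
def phiAux : ℕ → ℕ → ℚ → ℚ
  | 0, _, _ => 0
  | n + 1, m, t =>
      if t ≤ 1 / 2 then
        if m % 2 = 0 then (phiAux n (m + 1) (2 * t) + (8 * (m : ℚ) + 6) * t) / 8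
        else (phiAux n (m - 1) (2 * t) + ((2 * t) - (2 * t) ^ 2) + (8 * (m : ℚ) + 6) * t) / 8
      else
        if m = 0 then (phiAux n 0 (2 * t - 1) + 6 * (1 - t)) / 8
        else if m % 2 = 0 then
          (phiAux n (m - 1) (2 * t - 1) + ((2 * t - 1) - (2 * t - 1) ^ 2)
            + (8 * (m : ℚ) + 6) * (1 - t)) / 8
        else (phiAux n (m + 1) (2 * t - 1) + (8 * (m : ℚ) + 6) * (1 - t)) / 8

/-- The functions `φ_m ∈ X` of Definition 2.2. -/
def phiM (m : ℕ) : X := fun t => phiAux (padicValNat 2 t.1.den) m t.1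

/-- `ℕ` with the Nim-sum (bitwise XOR) as its (commutative) monoid operation. -/
def NimNat : Type := ℕ

instance : CommMonoid NimNat where
  mul a b := Nat.xor a b
  one := (0 : ℕ)
  mul_assoc := Nat.xor_assoc
  mul_comm := Nat.xor_comm
  one_mul := Nat.zero_xor
  mul_one := Nat.xor_zero

/-- The ring `Γ`: free `ℤ`-module on `λ₀, λ₁, …` with `λᵢλⱼ = λ_{i XOR j}`. -/
abbrev GammaZ : Type := MonoidAlgebra ℤ NimNat

/-- The ring `Γ_Q = Γ ⊗ ℚ`. -/
abbrev GammaQ : Type := MonoidAlgebra ℚ NimNat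

/-- The basis element `λᵢ` of `Γ`. -/
def lamZ (i : ℕ) : GammaZ := MonoidAlgebra.single (show NimNat from i) 1

/-- The basis element `λᵢ` of `Γ_Q`. -/
def lamQ (i : ℕ) : GammaQ := MonoidAlgebra.single (show NimNat from i) 1

/-- `δ_r = λ₀ − λ₁ + ⋯ + (−1)^{r−1} λ_{r−1}` in `Γ`. -/
def deltaZ (r : ℕ) : GammaZ := ∑ i ∈ Finset.range r, ((-1 : ℤ) ^ i) • lamZ i

/-- `δ_r` in `Γ_Q`. -/
def deltaQ (r : ℕ) : GammaQ := ∑ i ∈ Finset.range r, ((-1 : ℚ) ^ i) • lamQ i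

/-- `L_n(α) = Σ_{i=0}^{2^n−1} (α((i+1)/2^n) − α(i/2^n)) (−1)^i λᵢ ∈ Γ_Q`. -/
def Ln (n : ℕ) (α : X) : GammaQ :=
  ∑ i ∈ Finset.range (2 ^ n),
    ((-1 : ℚ) ^ i * (evI α (((i : ℚ) + 1) / 2 ^ n) - evI α ((i : ℚ) / 2 ^ n))) • lamQ i

/-- The Hilbert–Kunz function `φ_f ∈ X` of a power series `f`:
`φ_f(i/q) = q^{-r} · dim_F F[[u₁,…,u_r]]/(u₁^q,…,u_r^q,f^i)`. -/
def phiF {F : Type} [Field F] {σ : Type} (f : MvPowerSeries σ F) : X := fun t =>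
  ((Module.finrank F
      (MvPowerSeries σ F ⧸ Ideal.span
        (Set.range (fun j : σ => (MvPowerSeries.X j : MvPowerSeries σ F) ^ t.1.den)
          ∪ {f ^ t.1.num.toNat}))) : ℚ)
    / (t.1.den : ℚ) ^ (Nat.card σ)

/-- The natural inclusion `F[[u_j : j ∈ σ]] → F[[u_j : j ∈ τ]]` along an injection `e : σ → τ`. -/
def embPS {F : Type} [Field F] {σ τ : Type} (e : σ → τ) (f : MvPowerSeries σ F) :
    MvPowerSeries τ F := fun d =>
  if h : ∃ d' : σ →₀ ℕ, Finsupp.mapDomain e d' = d then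
    MvPowerSeries.coeff h.choose f
  else 0


section Statement15Aux

lemma phiAux_succ_def (n m : ℕ) (t : ℚ) :
    phiAux (n + 1) m t =
      if t ≤ 1 / 2 then
        if m % 2 = 0 then (phiAux n (m + 1) (2 * t) + (8 * (m : ℚ) + 6) * t) / 8
        else (phiAux n (m - 1) (2 * t) + ((2 * t) - (2 * t) ^ 2) + (8 * (m : ℚ) + 6) * t) / 8
      else
        if m = 0 then (phiAux n 0 (2 * t - 1) + 6 * (1 - t)) / 8
        else if m % 2 = 0 then
          (phiAux n (m - 1) (2 * t - 1) + ((2 * t - 1) - (2 * t - 1) ^ 2)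
            + (8 * (m : ℚ) + 6) * (1 - t)) / 8
        else (phiAux n (m + 1) (2 * t - 1) + (8 * (m : ℚ) + 6) * (1 - t)) / 8 := rfl

lemma phiAux_zero' (n m : ℕ) : phiAux n m 0 = 0 := by
  induction n generalizing m with
  | zero => rfl
  | succ n ih =>
    rw [phiAux_succ_def, if_pos (by norm_num)]
    split <;> norm_num [ih]

lemma phiAux_one' (n m : ℕ) : phiAux n m 1 = 0 := by
  induction n generalizing m with
  | zero => rfl
  | succ n ih =>
    rw [phiAux_succ_def, if_neg (by norm_num)]
    split
    · norm_num [ih]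
    · split <;> norm_num [ih]

lemma phiAux_left (n m : ℕ) (t : ℚ) (h : t ≤ 1 / 2) :
    phiAux (n + 1) m t =
      if m % 2 = 0 then (phiAux n (m + 1) (2 * t) + (8 * (m : ℚ) + 6) * t) / 8
      else (phiAux n (m - 1) (2 * t) + ((2 * t) - (2 * t) ^ 2) + (8 * (m : ℚ) + 6) * t) / 8 := by
  rw [phiAux_succ_def, if_pos h]

lemma phiAux_right (n m : ℕ) (t : ℚ) (h : 1 / 2 ≤ t) :
    phiAux (n + 1) m t =
      if m = 0 then (phiAux n 0 (2 * t - 1) + 6 * (1 - t)) / 8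
      else if m % 2 = 0 then
        (phiAux n (m - 1) (2 * t - 1) + ((2 * t - 1) - (2 * t - 1) ^ 2)
          + (8 * (m : ℚ) + 6) * (1 - t)) / 8
      else (phiAux n (m + 1) (2 * t - 1) + (8 * (m : ℚ) + 6) * (1 - t)) / 8 := by
  rcases eq_or_lt_of_le h with heq | hlt
  · subst heq
    rw [phiAux_succ_def, if_pos le_rfl]
    by_cases h0 : m = 0
    · subst h0
      norm_num [phiAux_zero', phiAux_one']
    · by_cases he : m % 2 = 0
      · rw [if_pos he, if_neg h0, if_pos he]
        norm_num [phiAux_zero', phiAux_one']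
      · rw [if_neg he, if_neg h0, if_neg he]
        norm_num [phiAux_zero', phiAux_one']
  · rw [phiAux_succ_def, if_neg (by linarith)]

lemma phiAux_step (n : ℕ) : ∀ (m j : ℕ), j ≤ 2 ^ n →
    phiAux (n + 1) m ((j : ℚ) / 2 ^ n) = phiAux n m ((j : ℚ) / 2 ^ n) := by
  induction n with
  | zero =>
    intro m j hj
    interval_cases j
    · norm_num [phiAux_zero']
    · norm_num [phiAux_one']
  | succ n ih =>
    intro m j hj
    have h2q : ((2 : ℚ)) ^ (n + 1) = 2 * 2 ^ n := by rw [pow_succ]; ring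
    by_cases hle : j ≤ 2 ^ n
    · have hjq : (j : ℚ) ≤ 2 ^ n := by exact_mod_cast hle
      have ht : ((j : ℚ) / 2 ^ (n + 1)) ≤ 1 / 2 := by
        rw [div_le_div_iff₀ (by positivity) (by norm_num), h2q]
        linarith
      have harg : 2 * ((j : ℚ) / 2 ^ (n + 1)) = (j : ℚ) / 2 ^ n := by
        rw [h2q]; field_simp
      rw [phiAux_left _ _ _ ht, phiAux_left _ _ _ ht, harg]
      by_cases he : m % 2 = 0
      · rw [if_pos he, if_pos he, ih _ _ hle]
      · rw [if_neg he, if_neg he, ih _ _ hle]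
    · obtain ⟨k, rfl⟩ : ∃ k, j = 2 ^ n + k := ⟨j - 2 ^ n, by omega⟩
      have hk : k ≤ 2 ^ n := by
        have h2 : 2 ^ (n + 1) = 2 ^ n * 2 := pow_succ 2 n
        omega
      have hkq : (k : ℚ) ≤ 2 ^ n := by exact_mod_cast hk
      have hc : ((2 ^ n + k : ℕ) : ℚ) = 2 ^ n + (k : ℚ) := by push_cast; ring
      rw [hc]
      have ht : (1 : ℚ) / 2 ≤ (2 ^ n + (k : ℚ)) / 2 ^ (n + 1) := by
        rw [div_le_div_iff₀ (by norm_num) (by positivity), h2q]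
        have : (0 : ℚ) ≤ (k : ℚ) := by positivity
        linarith
      have harg : 2 * ((2 ^ n + (k : ℚ)) / 2 ^ (n + 1)) - 1 = (k : ℚ) / 2 ^ n := by
        rw [h2q]; field_simp; ring
      rw [phiAux_right _ _ _ ht, phiAux_right _ _ _ ht, harg]
      by_cases h0 : m = 0
      · rw [if_pos h0, if_pos h0, ih _ _ hk]
      · by_cases he : m % 2 = 0
        · rw [if_neg h0, if_neg h0, if_pos he, if_pos he, ih _ _ hk]
        · rw [if_neg h0, if_neg h0, if_neg he, if_neg he, ih _ _ hk]

lemma phiAux_mono (k n m : ℕ) (j : ℕ) (hj : j ≤ 2 ^ n) :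
    phiAux (n + k) m ((j : ℚ) / 2 ^ n) = phiAux n m ((j : ℚ) / 2 ^ n) := by
  induction k with
  | zero => rfl
  | succ k ih =>
    have harg : ((j * 2 ^ k : ℕ) : ℚ) / 2 ^ (n + k) = (j : ℚ) / 2 ^ n := by
      push_cast
      rw [pow_add]
      rw [div_eq_div_iff (by positivity) (by positivity)]
      ring
    have hb : j * 2 ^ k ≤ 2 ^ (n + k) := by
      rw [pow_add]; exact Nat.mul_le_mul_right _ hj
    show phiAux ((n + k) + 1) m ((j : ℚ) / 2 ^ n) = _
    calc phiAux ((n + k) + 1) m ((j : ℚ) / 2 ^ n)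
        = phiAux ((n + k) + 1) m (((j * 2 ^ k : ℕ) : ℚ) / 2 ^ (n + k)) := by rw [harg]
      _ = phiAux (n + k) m (((j * 2 ^ k : ℕ) : ℚ) / 2 ^ (n + k)) := phiAux_step _ _ _ hb
      _ = phiAux n m ((j : ℚ) / 2 ^ n) := by rw [harg, ih]

lemma phiM_rep (m : ℕ) (s : dyadicI) (j n : ℕ) (hj : j ≤ 2 ^ n)
    (hs : s.1 = (j : ℚ) / 2 ^ n) : phiM m s = phiAux n m ((j : ℚ) / 2 ^ n) := by
  haveI : Fact (Nat.Prime 2) := ⟨Nat.prime_two⟩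
  have hden : s.1.den ∣ 2 ^ n := by
    rw [hs]
    have h1 : ((j : ℚ) / 2 ^ n) = Rat.divInt (j : ℤ) ((2 : ℤ) ^ n) := by
      rw [Rat.divInt_eq_div]; push_cast; ring
    rw [h1]
    have h2 := Rat.den_dvd (j : ℤ) ((2 : ℤ) ^ n)
    have h3 : ((Rat.divInt (j : ℤ) ((2 : ℤ) ^ n)).den : ℤ) ∣ ((2 ^ n : ℕ) : ℤ) := by
      push_cast; exact h2
    exact_mod_cast h3
  obtain ⟨a, han, hda⟩ := (Nat.dvd_prime_pow Nat.prime_two).mp hden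
  have hv : padicValNat 2 s.1.den = a := by rw [hda, padicValNat.prime_pow]
  have hnum0 : 0 ≤ s.1.num := Rat.num_nonneg.mpr s.2.1
  have hrep : s.1 = ((s.1.num.toNat : ℕ) : ℚ) / 2 ^ a := by
    conv_lhs => rw [← Rat.num_div_den s.1]
    rw [hda]
    have hc : ((s.1.num.toNat : ℕ) : ℚ) = (s.1.num : ℚ) := by
      exact_mod_cast congrArg (fun z : ℤ => (z : ℚ)) (Int.toNat_of_nonneg hnum0)
    rw [hc]
    norm_num
  have hle : s.1.num.toNat ≤ 2 ^ a := by
    have h1 : s.1 ≤ 1 := s.2.2.1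
    have hd : (0 : ℚ) < (s.1.den : ℚ) := by exact_mod_cast s.1.pos
    have h2 : (s.1.num : ℚ) ≤ (s.1.den : ℚ) := by
      rw [← Rat.num_div_den s.1, div_le_one hd] at h1
      exact h1
    have h3 : s.1.num ≤ (s.1.den : ℤ) := by exact_mod_cast h2
    omega
  have key : phiAux n m ((j : ℚ) / 2 ^ n) = phiAux a m ((s.1.num.toNat : ℚ) / 2 ^ a) := by
    have h1 : (j : ℚ) / 2 ^ n = ((s.1.num.toNat : ℕ) : ℚ) / 2 ^ a := by rw [← hs]; exact hrep
    rw [h1]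
    have h2 : n = a + (n - a) := by omega
    rw [h2]
    exact phiAux_mono _ _ _ _ hle
  show phiAux (padicValNat 2 s.1.den) m s.1 = _
  rw [hv, key, ← hrep]

lemma evI_phiM (m : ℕ) (j n : ℕ) (hj : j ≤ 2 ^ n) :
    evI (phiM m) ((j : ℚ) / 2 ^ n) = phiAux n m ((j : ℚ) / 2 ^ n) := by
  have hmem := dyadicI_mem (i := j) (n := n) hj
  rw [evI, dif_pos hmem]
  exact phiM_rep m ⟨_, hmem⟩ j n hj rfl

lemma endA (n : ℕ) : ∀ m : ℕ,
    phiAux n m ((1 : ℚ) / 2 ^ n) ≤ (4 * (m : ℚ) + 4) / 3 * (1 / 2 ^ n) ∧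
    (m % 2 = 1 → phiAux n m ((1 : ℚ) / 2 ^ n) ≤ (4 * (m : ℚ) + 3) / 3 * (1 / 2 ^ n)) := by
  induction n with
  | zero =>
    intro m
    have h0 : phiAux 0 m ((1 : ℚ) / 2 ^ 0) = 0 := rfl
    constructor
    · rw [h0]; positivity
    · intro _; rw [h0]; positivity
  | succ n ih =>
    intro m
    have h2q : ((2 : ℚ)) ^ (n + 1) = 2 * 2 ^ n := by rw [pow_succ]; ring
    have ht : (1 : ℚ) / 2 ^ (n + 1) ≤ 1 / 2 := by
      rw [div_le_div_iff₀ (by positivity) (by norm_num), h2q]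
      have : (1 : ℚ) ≤ 2 ^ n := by exact_mod_cast Nat.one_le_two_pow
      linarith
    have hA2B : (1 : ℚ) / 2 ^ n = 2 * (1 / 2 ^ (n + 1)) := by rw [h2q]; field_simp
    have hu : (0 : ℚ) ≤ 1 / 2 ^ (n + 1) := by positivity
    rw [phiAux_left _ _ _ ht]
    by_cases he : m % 2 = 0
    · rw [if_pos he]
      have hX := (ih (m + 1)).2 (by omega)
      rw [hA2B] at hX
      push_cast at hX
      constructor
      · linarith
      · intro h; omega
    · rw [if_neg he]
      have hm1 : 1 ≤ m := by omega
      have hX := (ih (m - 1)).1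
      have hc : ((m - 1 : ℕ) : ℚ) = (m : ℚ) - 1 := by rw [Nat.cast_sub hm1]; norm_num
      rw [hA2B, hc] at hX
      have hε : (2 * ((1 : ℚ) / 2 ^ (n + 1))) - (2 * ((1 : ℚ) / 2 ^ (n + 1))) ^ 2
          ≤ 2 * (1 / 2 ^ (n + 1)) := by
        nlinarith [sq_nonneg (2 * ((1 : ℚ) / 2 ^ (n + 1)))]
      constructor
      · linarith
      · intro _; linarith

lemma endB (n : ℕ) : ∀ m : ℕ,
    phiAux n m (1 - (1 : ℚ) / 2 ^ n) ≤ (4 * (m : ℚ) + 4) / 3 * (1 / 2 ^ n) ∧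
    (m % 2 = 0 → phiAux n m (1 - (1 : ℚ) / 2 ^ n) ≤ (4 * (m : ℚ) + 3) / 3 * (1 / 2 ^ n)) := by
  induction n with
  | zero =>
    intro m
    have h0 : phiAux 0 m (1 - (1 : ℚ) / 2 ^ 0) = 0 := rfl
    constructor
    · rw [h0]; positivity
    · intro _; rw [h0]; positivity
  | succ n ih =>
    intro m
    have hm : (0 : ℚ) ≤ m := Nat.cast_nonneg m
    by_cases hn : n = 0
    · subst hn
      rw [show (1 : ℚ) - 1 / 2 ^ (0 + 1) = 1 / 2 by norm_num]
      have hval : phiAux (0 + 1) m (1 / 2 : ℚ) = (4 * (m : ℚ) + 3) / 8 := by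
        rw [phiAux_left 0 m _ (by norm_num)]
        by_cases he : m % 2 = 0
        · rw [if_pos he]
          have : phiAux 0 (m + 1) (2 * (1 / 2 : ℚ)) = 0 := rfl
          rw [this]; ring
        · rw [if_neg he]
          have : phiAux 0 (m - 1) (2 * (1 / 2 : ℚ)) = 0 := rfl
          rw [this]; norm_num; ring
      rw [hval]
      constructor
      · norm_num; linarith
      · intro _; norm_num; linarith
    · have hn1 : 1 ≤ n := by omega
      have h2q : ((2 : ℚ)) ^ (n + 1) = 2 * 2 ^ n := by rw [pow_succ]; ring
      have h4 : (4 : ℚ) ≤ 2 ^ (n + 1) := by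
        calc (4 : ℚ) = 2 ^ 2 := by norm_num
        _ ≤ 2 ^ (n + 1) := by apply pow_le_pow_right₀ (by norm_num); omega
      have hsmall : (1 : ℚ) / 2 ^ (n + 1) ≤ 1 / 4 := by
        rw [div_le_div_iff₀ (by positivity) (by norm_num)]; linarith
      have ht : (1 : ℚ) / 2 ≤ 1 - 1 / 2 ^ (n + 1) := by linarith
      have hA2B : (1 : ℚ) / 2 ^ n = 2 * (1 / 2 ^ (n + 1)) := by rw [h2q]; field_simp
      have harg : 2 * (1 - (1 : ℚ) / 2 ^ (n + 1)) - 1 = 1 - 1 / 2 ^ n := by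
        rw [h2q]; field_simp; ring
      have hu : (0 : ℚ) ≤ 1 / 2 ^ (n + 1) := by positivity
      rw [phiAux_right _ _ _ ht, harg]
      by_cases h0 : m = 0
      · subst h0
        rw [if_pos rfl]
        have hX := (ih 0).2 rfl
        push_cast at hX
        have hX' : phiAux n 0 (1 - (1 : ℚ) / 2 ^ n) ≤ (4 * 0 + 3) / 3 * (2 * (1 / 2 ^ (n + 1))) := by
          rw [← hA2B]; exact_mod_cast hX
        push_cast
        constructor
        · linarith
        · intro _; linarith
      · by_cases he : m % 2 = 0
        · rw [if_neg h0, if_pos he]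
          have hm1 : 1 ≤ m := by omega
          have hX := (ih (m - 1)).1
          have hc : ((m - 1 : ℕ) : ℚ) = (m : ℚ) - 1 := by rw [Nat.cast_sub hm1]; norm_num
          rw [hc] at hX
          have hX' : phiAux n (m - 1) (1 - (1 : ℚ) / 2 ^ n)
              ≤ (4 * ((m : ℚ) - 1) + 4) / 3 * (2 * (1 / 2 ^ (n + 1))) := by
            rw [← hA2B]; exact hX
          have hε : (1 - (1 : ℚ) / 2 ^ n) - (1 - (1 : ℚ) / 2 ^ n) ^ 2 ≤ 2 * (1 / 2 ^ (n + 1)) := by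
            rw [← hA2B]
            nlinarith [sq_nonneg ((1 : ℚ) / 2 ^ n)]
          constructor
          · linarith [hX']
          · intro _; linarith [hX']
        · rw [if_neg h0, if_neg he]
          have hX := (ih (m + 1)).2 (by omega)
          push_cast at hX
          have hX' : phiAux n (m + 1) (1 - (1 : ℚ) / 2 ^ n)
              ≤ (4 * ((m : ℚ) + 1) + 3) / 3 * (2 * (1 / 2 ^ (n + 1))) := by
            rw [← hA2B]; exact hX
          constructor
          · linarith [hX']
          · intro h; exact absurd h he

set_option maxHeartbeats 1000000 in
lemma conv : ∀ n m (i : ℕ), 0 < i → i < 2 ^ n →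
    phiAux n m (((i : ℚ) - 1) / 2 ^ n) + phiAux n m (((i : ℚ) + 1) / 2 ^ n)
      ≤ 2 * phiAux n m ((i : ℚ) / 2 ^ n) := by
  intro n
  induction n with
  | zero => intro m i h1 h2; omega
  | succ n ih =>
    intro m i h1 h2
    have h2q : ((2 : ℚ)) ^ (n + 1) = 2 * 2 ^ n := by rw [pow_succ]; ring
    have hq : (0 : ℚ) < 2 ^ n := by positivity
    have hm' : (0 : ℚ) ≤ (m : ℚ) := Nat.cast_nonneg m
    have hu : (0 : ℚ) ≤ 1 / 2 ^ n := by positivity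
    rcases lt_trichotomy i (2 ^ n) with hlt | heq | hgt
    · have hi2 : (i : ℚ) + 1 ≤ 2 ^ n := by exact_mod_cast Nat.succ_le_of_lt hlt
      have hiq1 : (1 : ℚ) ≤ (i : ℚ) := by exact_mod_cast h1
      have htm1 : ((i : ℚ) - 1) / 2 ^ (n + 1) ≤ 1 / 2 := by
        rw [div_le_div_iff₀ (by positivity) (by norm_num), h2q]; linarith
      have ht : ((i : ℚ)) / 2 ^ (n + 1) ≤ 1 / 2 := by
        rw [div_le_div_iff₀ (by positivity) (by norm_num), h2q]; linarith
      have htp1 : ((i : ℚ) + 1) / 2 ^ (n + 1) ≤ 1 / 2 := by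
        rw [div_le_div_iff₀ (by positivity) (by norm_num), h2q]; linarith
      have em1 : 2 * (((i : ℚ) - 1) / 2 ^ (n + 1)) = ((i : ℚ) - 1) / 2 ^ n := by
        rw [h2q]; field_simp
      have e : 2 * (((i : ℚ)) / 2 ^ (n + 1)) = ((i : ℚ)) / 2 ^ n := by
        rw [h2q]; field_simp
      have ep1 : 2 * (((i : ℚ) + 1) / 2 ^ (n + 1)) = ((i : ℚ) + 1) / 2 ^ n := by
        rw [h2q]; field_simp
      rw [phiAux_left n m _ htm1, phiAux_left n m _ ht, phiAux_left n m _ htp1, em1, e, ep1]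
      by_cases he : m % 2 = 0
      · rw [if_pos he, if_pos he, if_pos he]
        have hc := ih (m + 1) i h1 hlt
        ring_nf at hc ⊢
        linarith
      · rw [if_neg he, if_neg he, if_neg he]
        have hc := ih (m - 1) i h1 hlt
        have hsq : (((i : ℚ) - 1) / 2 ^ n) ^ 2 + (((i : ℚ) + 1) / 2 ^ n) ^ 2
            - 2 * (((i : ℚ)) / 2 ^ n) ^ 2 = 2 * (1 / 2 ^ n) ^ 2 := by
          field_simp; ring
        have hpos : (0 : ℚ) ≤ ((1 : ℚ) / 2 ^ n) ^ 2 := by positivity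
        ring_nf at hc hsq hpos ⊢
        linarith
    · subst heq
      have hcast : ((2 ^ n : ℕ) : ℚ) = (2 : ℚ) ^ n := by push_cast; ring
      rw [hcast]
      have h1q : (1 : ℚ) ≤ (2 : ℚ) ^ n := by exact_mod_cast Nat.one_le_two_pow
      have htm1 : ((2 : ℚ) ^ n - 1) / 2 ^ (n + 1) ≤ 1 / 2 := by
        rw [div_le_div_iff₀ (by positivity) (by norm_num), h2q]; linarith
      have ht : ((2 : ℚ) ^ n) / 2 ^ (n + 1) ≤ 1 / 2 := by
        rw [div_le_div_iff₀ (by positivity) (by norm_num), h2q]; linarith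
      have htp1 : (1 : ℚ) / 2 ≤ ((2 : ℚ) ^ n + 1) / 2 ^ (n + 1) := by
        rw [div_le_div_iff₀ (by norm_num) (by positivity), h2q]; linarith
      have em1 : 2 * (((2 : ℚ) ^ n - 1) / 2 ^ (n + 1)) = 1 - 1 / 2 ^ n := by
        rw [h2q]; field_simp
      have e : 2 * (((2 : ℚ) ^ n) / 2 ^ (n + 1)) = 1 := by
        rw [h2q]; field_simp
      have ep1 : 2 * (((2 : ℚ) ^ n + 1) / 2 ^ (n + 1)) - 1 = 1 / 2 ^ n := by
        rw [h2q]; field_simp; ring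
      rw [phiAux_left n m _ htm1, phiAux_left n m _ ht, phiAux_right n m _ htp1, em1, e, ep1]
      have epm1 : ((2 : ℚ) ^ n - 1) / 2 ^ (n + 1) = (1 - 1 / 2 ^ n) / 2 := by linarith
      have ep : ((2 : ℚ) ^ n) / 2 ^ (n + 1) = 1 / 2 := by linarith
      have epp1 : ((2 : ℚ) ^ n + 1) / 2 ^ (n + 1) = (1 + 1 / 2 ^ n) / 2 := by linarith
      rw [epm1, ep, epp1]
      have hc2 : ((m + 1 : ℕ) : ℚ) = (m : ℚ) + 1 := by push_cast; ring
      by_cases h0 : m = 0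
      · have he : m % 2 = 0 := by omega
        rw [if_pos he, if_pos h0, if_pos he]
        rw [phiAux_one' n (m + 1)]
        have hP := (endB n (m + 1)).1
        rw [hc2] at hP
        have hQ := (endA n 0).1
        push_cast at hQ
        have hm0 : (m : ℚ) = 0 := by rw [h0]; norm_num
        have hmu : (m : ℚ) * (1 / 2 ^ n) = 0 := by rw [hm0, zero_mul]
        nlinarith [hP, hQ, hu, hm0, hmu]
      · by_cases he : m % 2 = 0
        · rw [if_pos he, if_pos he, if_neg h0, if_pos he]
          rw [phiAux_one' n (m + 1)]
          have hm1 : 1 ≤ m := by omega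
          have hc : ((m - 1 : ℕ) : ℚ) = (m : ℚ) - 1 := by rw [Nat.cast_sub hm1]; norm_num
          have hP := (endB n (m + 1)).1
          rw [hc2] at hP
          have hQ := (endA n (m - 1)).2 (by omega)
          rw [hc] at hQ
          have hε : (1 : ℚ) / 2 ^ n - ((1 : ℚ) / 2 ^ n) ^ 2 ≤ 1 / 2 ^ n := by
            nlinarith [sq_nonneg ((1 : ℚ) / 2 ^ n)]
          nlinarith [hP, hQ, hε, hu, mul_nonneg hm' hu]
        · rw [if_neg he, if_neg he, if_neg h0, if_neg he]
          rw [phiAux_one' n (m - 1)]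
          have hm1 : 1 ≤ m := by omega
          have hc : ((m - 1 : ℕ) : ℚ) = (m : ℚ) - 1 := by rw [Nat.cast_sub hm1]; norm_num
          have hP := (endB n (m - 1)).2 (by omega)
          rw [hc] at hP
          have hQ := (endA n (m + 1)).1
          rw [hc2] at hQ
          have hε2 : (1 - (1 : ℚ) / 2 ^ n) - (1 - (1 : ℚ) / 2 ^ n) ^ 2 ≤ 1 / 2 ^ n := by
            nlinarith [sq_nonneg ((1 : ℚ) / 2 ^ n)]
          nlinarith [hP, hQ, hε2, hu, mul_nonneg hm' hu]
    · obtain ⟨k, rfl⟩ : ∃ k, i = 2 ^ n + k := ⟨i - 2 ^ n, by omega⟩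
      have hk1 : 0 < k := by omega
      have hkn : k < 2 ^ n := by
        have h2 : 2 ^ (n + 1) = 2 ^ n * 2 := pow_succ 2 n
        omega
      have hcast : ((2 ^ n + k : ℕ) : ℚ) = (2 : ℚ) ^ n + (k : ℚ) := by push_cast; ring
      rw [hcast]
      have hkq : (1 : ℚ) ≤ (k : ℚ) := by exact_mod_cast hk1
      have hkq2 : (k : ℚ) + 1 ≤ 2 ^ n := by exact_mod_cast Nat.succ_le_of_lt hkn
      have htm1 : (1 : ℚ) / 2 ≤ ((2 : ℚ) ^ n + (k : ℚ) - 1) / 2 ^ (n + 1) := by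
        rw [div_le_div_iff₀ (by norm_num) (by positivity), h2q]; linarith
      have ht : (1 : ℚ) / 2 ≤ ((2 : ℚ) ^ n + (k : ℚ)) / 2 ^ (n + 1) := by
        rw [div_le_div_iff₀ (by norm_num) (by positivity), h2q]; linarith
      have htp1 : (1 : ℚ) / 2 ≤ ((2 : ℚ) ^ n + (k : ℚ) + 1) / 2 ^ (n + 1) := by
        rw [div_le_div_iff₀ (by norm_num) (by positivity), h2q]; linarith
      have em1 : 2 * (((2 : ℚ) ^ n + (k : ℚ) - 1) / 2 ^ (n + 1)) - 1 = ((k : ℚ) - 1) / 2 ^ n := by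
        rw [h2q]; field_simp; ring
      have e : 2 * (((2 : ℚ) ^ n + (k : ℚ)) / 2 ^ (n + 1)) - 1 = ((k : ℚ)) / 2 ^ n := by
        rw [h2q]; field_simp; ring
      have ep1 : 2 * (((2 : ℚ) ^ n + (k : ℚ) + 1) / 2 ^ (n + 1)) - 1 = ((k : ℚ) + 1) / 2 ^ n := by
        rw [h2q]; field_simp; ring
      rw [phiAux_right n m _ htm1, phiAux_right n m _ ht, phiAux_right n m _ htp1, em1, e, ep1]
      by_cases h0 : m = 0
      · rw [if_pos h0, if_pos h0, if_pos h0]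
        have hc := ih 0 k hk1 hkn
        ring_nf at hc ⊢
        linarith
      · by_cases he : m % 2 = 0
        · rw [if_neg h0, if_pos he, if_neg h0, if_pos he, if_neg h0, if_pos he]
          have hc := ih (m - 1) k hk1 hkn
          have hsq : (((k : ℚ) - 1) / 2 ^ n) ^ 2 + (((k : ℚ) + 1) / 2 ^ n) ^ 2
              - 2 * (((k : ℚ)) / 2 ^ n) ^ 2 = 2 * (1 / 2 ^ n) ^ 2 := by
            field_simp; ring
          have hpos : (0 : ℚ) ≤ ((1 : ℚ) / 2 ^ n) ^ 2 := by positivity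
          ring_nf at hc hsq hpos ⊢
          linarith
        · rw [if_neg h0, if_neg he, if_neg h0, if_neg he, if_neg h0, if_neg he]
          have hc := ih (m + 1) k hk1 hkn
          ring_nf at hc ⊢
          linarith

lemma chain (n m : ℕ) : ∀ (c k : ℕ), k + c < 2 ^ n →
    phiAux n m (((k : ℚ) + (c : ℚ) + 1) / 2 ^ n) - phiAux n m (((k : ℚ) + (c : ℚ)) / 2 ^ n)
      ≤ phiAux n m (((k : ℚ) + 1) / 2 ^ n) - phiAux n m ((k : ℚ) / 2 ^ n) := by
  intro c
  induction c with
  | zero => intro k hk; norm_num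
  | succ c ih =>
    intro k hk
    have h1 := ih k (by omega)
    have hc := conv n m (k + c + 1) (by omega) (by omega)
    push_cast at hc ⊢
    have e1 : (k : ℚ) + (c : ℚ) + 1 - 1 = (k : ℚ) + (c : ℚ) := by ring
    rw [e1] at hc
    have e2 : (k : ℚ) + ((c : ℚ) + 1) + 1 = (k : ℚ) + (c : ℚ) + 1 + 1 := by ring
    have e3 : (k : ℚ) + ((c : ℚ) + 1) = (k : ℚ) + (c : ℚ) + 1 := by ring
    rw [e2, e3]
    linarith

lemma incr (n m i : ℕ) (hi : i < 2 ^ n) :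
    |phiAux n m (((i : ℚ) + 1) / 2 ^ n) - phiAux n m ((i : ℚ) / 2 ^ n)|
      ≤ (4 * (m : ℚ) + 4) / 3 * (1 / 2 ^ n) := by
  rw [abs_le]
  constructor
  · have h := chain n m (2 ^ n - 1 - i) i (by omega)
    have hcc : ((2 ^ n - 1 - i : ℕ) : ℚ) = (2 : ℚ) ^ n - 1 - (i : ℚ) := by
      have h1 : (1:ℕ) ≤ 2 ^ n := Nat.one_le_two_pow
      push_cast [Nat.cast_sub (by omega : i ≤ 2 ^ n - 1), Nat.cast_sub h1]
      ring
    rw [hcc] at h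
    have e1 : (i : ℚ) + ((2 : ℚ) ^ n - 1 - (i : ℚ)) + 1 = (2 : ℚ) ^ n := by ring
    have e2 : (i : ℚ) + ((2 : ℚ) ^ n - 1 - (i : ℚ)) = (2 : ℚ) ^ n - 1 := by ring
    rw [e1, e2] at h
    have e3 : ((2 : ℚ) ^ n) / 2 ^ n = 1 := by field_simp
    have e4 : ((2 : ℚ) ^ n - 1) / 2 ^ n = 1 - 1 / 2 ^ n := by field_simp
    rw [e3, e4, phiAux_one'] at h
    have hB := (endB n m).1
    linarith
  · have h := chain n m i 0 (by omega)
    rw [Nat.cast_zero] at h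
    rw [show ((0 : ℚ) + (i : ℚ) + 1) = (i : ℚ) + 1 by ring,
      show ((0 : ℚ) + (i : ℚ)) = (i : ℚ) by ring,
      show ((0 : ℚ) + 1) = (1 : ℚ) by ring,
      zero_div, phiAux_zero'] at h
    have hA := (endA n m).1
    linarith [h, hA]

lemma lip_chain (n m : ℕ) : ∀ (c a : ℕ), a + c ≤ 2 ^ n →
    |phiAux n m (((a : ℚ) + (c : ℚ)) / 2 ^ n) - phiAux n m ((a : ℚ) / 2 ^ n)|
      ≤ (4 * (m : ℚ) + 4) / 3 * ((c : ℚ) / 2 ^ n) := by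
  intro c
  induction c with
  | zero => intro a ha; norm_num
  | succ c ih =>
    intro a ha
    have h1 := ih a (by omega)
    have h2 := incr n m (a + c) (by omega)
    push_cast at h2 ⊢
    have e : (a : ℚ) + ((c : ℚ) + 1) = ((a : ℚ) + (c : ℚ)) + 1 := by ring
    rw [e]
    have tri := abs_sub_le (phiAux n m ((((a : ℚ) + (c : ℚ)) + 1) / 2 ^ n))
      (phiAux n m (((a : ℚ) + (c : ℚ)) / 2 ^ n)) (phiAux n m ((a : ℚ) / 2 ^ n))
    have hexp : (4 * (m : ℚ) + 4) / 3 * (((c : ℚ) + 1) / 2 ^ n)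
        = (4 * (m : ℚ) + 4) / 3 * ((c : ℚ) / 2 ^ n) + (4 * (m : ℚ) + 4) / 3 * (1 / 2 ^ n) := by
      ring
    rw [hexp]
    linarith

lemma lip_oriented (m N a b : ℕ) (hb : b ≤ 2 ^ N) (hab : a ≤ b) :
    |phiAux N m ((b : ℚ) / 2 ^ N) - phiAux N m ((a : ℚ) / 2 ^ N)|
      ≤ (4 * (m : ℚ) + 4) / 3 * ((b : ℚ) / 2 ^ N - (a : ℚ) / 2 ^ N) := by
  obtain ⟨c, rfl⟩ := Nat.exists_eq_add_of_le hab
  have h := lip_chain N m c a (by omega)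
  push_cast
  have e1 : ((a : ℚ) + (c : ℚ)) / 2 ^ N - (a : ℚ) / 2 ^ N = (c : ℚ) / 2 ^ N := by ring
  rw [e1]
  exact h

end Statement15Aux

/-- Theorem 2.10: each `φ_m` is convex and Lipschitz with Lipschitz constant `(4m+4)/3`. -/
theorem statement15 (m : ℕ) :
    ConvexX (phiM m) ∧ LipschitzQ ((4 * (m : ℚ) + 4) / 3) (phiM m) := by
  constructor
  · intro n i h1 h2
    have hv1 : evI (phiM m) (((i : ℚ) - 1) / 2 ^ n) = phiAux n m (((i : ℚ) - 1) / 2 ^ n) := by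
      have h := evI_phiM m (i - 1) n (by omega)
      rwa [Nat.cast_sub h1, Nat.cast_one] at h
    have hv2 : evI (phiM m) ((i : ℚ) / 2 ^ n) = phiAux n m ((i : ℚ) / 2 ^ n) :=
      evI_phiM m i n (by omega)
    have hv3 : evI (phiM m) (((i : ℚ) + 1) / 2 ^ n) = phiAux n m (((i : ℚ) + 1) / 2 ^ n) := by
      have h := evI_phiM m (i + 1) n (by omega)
      rwa [Nat.cast_add, Nat.cast_one] at h
    rw [hv1, hv2, hv3]
    exact conv n m i h1 h2
  · intro s t
    obtain ⟨hs0, hs1, is, ns, hsrep⟩ := s.2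
    obtain ⟨ht0, ht1, it, nt, htrep⟩ := t.2
    have hsrep' : s.1 = ((is * 2 ^ nt : ℕ) : ℚ) / 2 ^ (ns + nt) := by
      rw [hsrep]; push_cast; rw [pow_add]
      rw [div_eq_div_iff (by positivity) (by positivity)]; ring
    have htrep' : t.1 = ((it * 2 ^ ns : ℕ) : ℚ) / 2 ^ (ns + nt) := by
      rw [htrep]; push_cast; rw [pow_add]
      rw [div_eq_div_iff (by positivity) (by positivity)]; ring
    have hbs : is * 2 ^ nt ≤ 2 ^ (ns + nt) := by
      have h := hsrep' ▸ hs1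
      rw [div_le_one (by positivity)] at h
      exact_mod_cast h
    have hbt : it * 2 ^ ns ≤ 2 ^ (ns + nt) := by
      have h := htrep' ▸ ht1
      rw [div_le_one (by positivity)] at h
      exact_mod_cast h
    have hφs : phiM m s = phiAux (ns + nt) m (((is * 2 ^ nt : ℕ) : ℚ) / 2 ^ (ns + nt)) :=
      phiM_rep m s _ _ hbs hsrep'
    have hφt : phiM m t = phiAux (ns + nt) m (((it * 2 ^ ns : ℕ) : ℚ) / 2 ^ (ns + nt)) :=
      phiM_rep m t _ _ hbt htrep'
    set a := is * 2 ^ nt with ha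
    set b := it * 2 ^ ns with hbdef
    rcases le_total a b with hab | hab
    · have h := lip_oriented m (ns + nt) a b hbt hab
      have hmono : (a : ℚ) / 2 ^ (ns + nt) ≤ (b : ℚ) / 2 ^ (ns + nt) := by
        gcongr

      have habs : |s.1 - t.1| = (b : ℚ) / 2 ^ (ns + nt) - (a : ℚ) / 2 ^ (ns + nt) := by
        rw [hsrep', htrep', abs_sub_comm, abs_of_nonneg (sub_nonneg.mpr hmono)]
      rw [hφs, hφt, abs_sub_comm, habs]
      exact h
    · have h := lip_oriented m (ns + nt) b a hbs hab
      have hmono : (b : ℚ) / 2 ^ (ns + nt) ≤ (a : ℚ) / 2 ^ (ns + nt) := by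
        gcongr

      have habs : |s.1 - t.1| = (a : ℚ) / 2 ^ (ns + nt) - (b : ℚ) / 2 ^ (ns + nt) := by
        rw [hsrep', htrep', abs_of_nonneg (sub_nonneg.mpr hmono)]
      rw [hφs, hφt, habs]
      exact h
end
end

section
/- If V₁ and V₂ are finite-dimensional subspaces of X each stable under T₀ and T₁, then the subspace of X spanned by the constant function 1 together with all products α # β with α ∈ V₁ and β ∈ V₂ is finite-dimensional and stable under T₀ and T₁. In particular, if α, β ∈ X each lie in finite-dimensional subspaces of X stable under T₀ and T₁, then so does α # β. -/
open scoped BigOperators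

noncomputable section

attribute [local instance] Classical.propDecidable

lemma evI_mem (α : X) {t : ℚ} (h : t ∈ dyadicI) : evI α t = α ⟨t, h⟩ := dif_pos h

lemma evI_add (α α' : X) (t : ℚ) : evI (α + α') t = evI α t + evI α' t := by
  unfold evI; split_ifs with h; · rfl
  · ring

lemma evI_smul (c : ℚ) (α : X) (t : ℚ) : evI (c • α) t = c * evI α t := by
  unfold evI; split_ifs with h; · rfl
  · ring

lemma T0_add (α α' : X) : T0 (α + α') = T0 α + T0 α' := by
  funext t; simp [T0, evI_add]

lemma T1_add (α α' : X) : T1 (α + α') = T1 α + T1 α' := by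
  funext t; simp [T1, evI_add]

lemma T0_smul (c : ℚ) (α : X) : T0 (c • α) = c • T0 α := by
  funext t; simp [T0, evI_smul]

lemma T1_smul (c : ℚ) (α : X) : T1 (c • α) = c • T1 α := by
  funext t; simp [T1, evI_smul]

lemma hashAux_zero (n : ℕ) (α β : X) : hashAux n α β 0 = 0 := by
  induction n generalizing α β with
  | zero => simp [hashAux]
  | succ n ih => norm_num [hashAux, ih]

lemma hashAux_add_left (n : ℕ) (α α' β : X) (t : ℚ) :
    hashAux n (α + α') β t = hashAux n α β t + hashAux n α' β t := by
  induction n generalizing α α' β t with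
  | zero =>
    simp only [hashAux, evI_add]; split_ifs <;> ring
  | succ n ih =>
    simp only [hashAux, T0_add, T1_add, ih]; split_ifs <;> ring

lemma hashAux_add_right (n : ℕ) (α β β' : X) (t : ℚ) :
    hashAux n α (β + β') t = hashAux n α β t + hashAux n α β' t := by
  induction n generalizing α β β' t with
  | zero =>
    simp only [hashAux, evI_add]; split_ifs <;> ring
  | succ n ih =>
    simp only [hashAux, T0_add, T1_add, ih]; split_ifs <;> ring

lemma hashAux_smul_left (n : ℕ) (c : ℚ) (α β : X) (t : ℚ) :
    hashAux n (c • α) β t = c * hashAux n α β t := by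
  induction n generalizing α β t with
  | zero =>
    simp only [hashAux, evI_smul]; split_ifs <;> ring
  | succ n ih =>
    simp only [hashAux, T0_smul, T1_smul, ih]; split_ifs <;> ring

lemma hashAux_smul_right (n : ℕ) (c : ℚ) (α β : X) (t : ℚ) :
    hashAux n α (c • β) t = c * hashAux n α β t := by
  induction n generalizing α β t with
  | zero =>
    simp only [hashAux, evI_smul]; split_ifs <;> ring
  | succ n ih =>
    simp only [hashAux, T0_smul, T1_smul, ih]; split_ifs <;> ring

lemma evI_T0 (α : X) {t : ℚ} (h : t ∈ dyadicI) : evI (T0 α) t = evI α (t / 2) := by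
  rw [evI_mem _ h]; rfl

lemma evI_T1 (α : X) {t : ℚ} (h : t ∈ dyadicI) : evI (T1 α) t = evI α ((1 + t) / 2) := by
  rw [evI_mem _ h]; rfl

lemma half_mem {t : ℚ} (h : t ∈ dyadicI) : t / 2 ∈ dyadicI := by
  obtain ⟨h0, h1, i, n, ht⟩ := h
  exact ⟨by linarith, by linarith, i, n + 1, by rw [ht, pow_succ]; ring⟩

lemma halfup_mem {t : ℚ} (h : t ∈ dyadicI) : (1 + t) / 2 ∈ dyadicI := by
  obtain ⟨h0, h1, i, n, ht⟩ := h
  refine ⟨by linarith, by linarith, 2 ^ n + i, n + 1, ?_⟩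
  rw [ht, pow_succ]
  push_cast
  field_simp
  try ring

lemma hashAux_succ (n : ℕ) (α β : X) (t : ℚ) (h0 : 0 ≤ t) (h1 : t ≤ 1)
    (hmm : ∃ m : ℤ, t = (m : ℚ) / 2 ^ n) :
    hashAux (n + 1) α β t = hashAux n α β t := by
  induction n generalizing α β t with
  | zero =>
    obtain ⟨m, hm⟩ := hmm
    have hm' : t = (m : ℚ) := by simpa using hm
    have hm0 : (0 : ℤ) ≤ m := by exact_mod_cast hm' ▸ h0
    have hm1 : m ≤ 1 := by exact_mod_cast hm' ▸ h1
    rcases (by omega : m = 0 ∨ m = 1) with rfl | rfl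
    · norm_num [hm', hashAux]
    · have hm'' : t = 1 := by simpa using hm'
      subst hm''
      have A1 := evI_T0 α one_mem_dyadicI
      have A0 := evI_T0 α zero_mem_dyadicI
      have B1 := evI_T1 α one_mem_dyadicI
      have B0 := evI_T1 α zero_mem_dyadicI
      have C1 := evI_T0 β one_mem_dyadicI
      have C0 := evI_T0 β zero_mem_dyadicI
      have D1 := evI_T1 β one_mem_dyadicI
      have D0 := evI_T1 β zero_mem_dyadicI
      norm_num at A1 A0 B1 B0 C1 C0 D1 D0
      norm_num [hashAux, A1, A0, B1, B0, C1, C0, D1, D0]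
      try ring
  | succ n ih =>
    obtain ⟨m, hm⟩ := hmm
    by_cases hc : t ≤ 1 / 2
    · have hr : ∃ m' : ℤ, 2 * t = (m' : ℚ) / 2 ^ n :=
        ⟨m, by rw [hm, pow_succ]; field_simp⟩
      rw [show n + 1 + 1 = (n + 1) + 1 from rfl, hashAux, if_pos hc,
        ih _ _ _ (by linarith) (by linarith) hr, ih _ _ _ (by linarith) (by linarith) hr,
        hashAux, if_pos hc]
    · have hc' : 1 / 2 < t := not_le.mp hc
      have hr : ∃ m' : ℤ, 2 * t - 1 = (m' : ℚ) / 2 ^ n :=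
        ⟨m - 2 ^ n, by rw [hm, pow_succ]; push_cast; field_simp⟩
      have hone : ∃ m' : ℤ, (1 : ℚ) = (m' : ℚ) / 2 ^ n :=
        ⟨2 ^ n, by push_cast; field_simp⟩
      rw [show n + 1 + 1 = (n + 1) + 1 from rfl, hashAux, if_neg hc,
        ih _ _ _ (by linarith) (by linarith) hr, ih _ _ _ (by linarith) (by linarith) hr,
        ih _ _ _ (by norm_num) le_rfl hone, ih _ _ _ (by norm_num) le_rfl hone,
        hashAux, if_neg hc]

lemma hashAux_plus (j d : ℕ) (α β : X) (t : ℚ) (h0 : 0 ≤ t) (h1 : t ≤ 1)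
    (m : ℤ) (hm : t = (m : ℚ) / 2 ^ j) :
    hashAux (j + d) α β t = hashAux j α β t := by
  induction d with
  | zero => rfl
  | succ d ih =>
    rw [show j + (d + 1) = (j + d) + 1 from rfl,
      hashAux_succ (j + d) α β t h0 h1 ⟨m * 2 ^ d, by rw [hm]; push_cast; rw [pow_add]; field_simp⟩,
      ih]

lemma den_eq_pow {t : ℚ} (n : ℕ) (m : ℤ) (hm : t = (m : ℚ) / 2 ^ n) :
    t.den = 2 ^ padicValNat 2 t.den := by
  have hd : t.den ∣ 2 ^ n := by
    have := Rat.den_dvd m (2 ^ n)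
    rw [Rat.divInt_eq_div] at this
    push_cast at this
    rw [← hm] at this
    exact_mod_cast this
  obtain ⟨j, _, hje⟩ := (Nat.dvd_prime_pow Nat.prime_two).mp hd
  rw [hje]
  simp [padicValNat.prime_pow]

lemma hash_apply (α β : X) {t : ℚ} (h : t ∈ dyadicI) (n : ℕ) (m : ℤ)
    (hm : t = (m : ℚ) / 2 ^ n) :
    hash α β ⟨t, h⟩ = hashAux n α β t := by
  have h0 := h.1
  have h1 := h.2.1
  set j := padicValNat 2 t.den with hj
  have hden : t.den = 2 ^ j := den_eq_pow n m hm
  have hjn : j ≤ n := by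
    have hd : t.den ∣ 2 ^ n := by
      have := Rat.den_dvd m (2 ^ n)
      rw [Rat.divInt_eq_div] at this
      push_cast at this
      rw [← hm] at this
      exact_mod_cast this
    rw [hden] at hd
    exact (Nat.pow_dvd_pow_iff_le_right (by norm_num)).mp hd
  have htj : t = (t.num : ℚ) / 2 ^ j := by
    have hq : ((t.den : ℚ)) = 2 ^ j := by exact_mod_cast congrArg (Nat.cast (R := ℚ)) hden
    rw [← hq]
    exact (Rat.num_div_den t).symm
  show hashAux j α β t = hashAux n α β t
  obtain ⟨d, rfl⟩ : ∃ d, n = j + d := ⟨n - j, by omega⟩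
  exact (hashAux_plus j d α β t h0 h1 t.num htj).symm

lemma T0_oneX : T0 oneX = oneX := by
  funext s
  show evI oneX (s.1 / 2) = 1
  rw [evI_mem _ (half_mem s.2)]
  rfl

lemma T1_oneX : T1 oneX = oneX := by
  funext s
  show evI oneX ((1 + s.1) / 2) = 1
  rw [evI_mem _ (halfup_mem s.2)]
  rfl

lemma T0_hash (α β : X) :
    T0 (hash α β) = hash (T0 α) (T0 β) + hash (T1 α) (T1 β) := by
  funext s
  obtain ⟨t, ht⟩ := s
  obtain ⟨h0, h1, i, n, hti⟩ := ht
  have ht : t ∈ dyadicI := ⟨h0, h1, i, n, hti⟩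
  show evI (hash α β) (t / 2) = _
  rw [evI_mem _ (half_mem ht)]
  rw [hash_apply α β (half_mem ht) (n + 1) ((i : ℤ))
      (by rw [hti, pow_succ]; push_cast; ring)]
  rw [hashAux, if_pos (by linarith : t / 2 ≤ 1 / 2)]
  rw [show 2 * (t / 2) = t by ring]
  show _ = hash (T0 α) (T0 β) ⟨t, ht⟩ + hash (T1 α) (T1 β) ⟨t, ht⟩
  rw [hash_apply _ _ ht n ((i:ℤ)) (by rw [hti]; push_cast; ring),
    hash_apply _ _ ht n ((i:ℤ)) (by rw [hti]; push_cast; ring)]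

lemma hash_at_zero (α β : X) : hash α β ⟨0, zero_mem_dyadicI⟩ = 0 := by
  rw [hash_apply α β zero_mem_dyadicI 0 0 (by norm_num)]
  simp [hashAux]

lemma hash_at_one (α β : X) (n : ℕ) :
    hashAux n α β 1 = hash α β ⟨1, one_mem_dyadicI⟩ := by
  rw [hash_apply α β one_mem_dyadicI n (2 ^ n) (by push_cast; try field_simp)]

lemma T1_hash (α β : X) :
    T1 (hash α β) =
      (hash (T0 α) (T0 β) ⟨1, one_mem_dyadicI⟩
        + hash (T1 α) (T1 β) ⟨1, one_mem_dyadicI⟩) • oneX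
      + hash (T0 α) (T1 β) + hash (T1 α) (T0 β) := by
  funext s
  obtain ⟨t, ht⟩ := s
  obtain ⟨h0, h1, i, n, hti⟩ := ht
  have ht : t ∈ dyadicI := ⟨h0, h1, i, n, hti⟩
  show evI (hash α β) ((1 + t) / 2) = _
  rw [evI_mem _ (halfup_mem ht)]
  rw [hash_apply α β (halfup_mem ht) (n + 1) (2 ^ n + i)
      (by rw [hti, pow_succ]; push_cast; field_simp; try ring)]
  have hRHS : (((hash (T0 α) (T0 β) ⟨1, one_mem_dyadicI⟩
        + hash (T1 α) (T1 β) ⟨1, one_mem_dyadicI⟩) • oneX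
      + hash (T0 α) (T1 β) + hash (T1 α) (T0 β)) : X) ⟨t, ht⟩
      = (hash (T0 α) (T0 β) ⟨1, one_mem_dyadicI⟩
        + hash (T1 α) (T1 β) ⟨1, one_mem_dyadicI⟩)
        + hash (T0 α) (T1 β) ⟨t, ht⟩ + hash (T1 α) (T0 β) ⟨t, ht⟩ := by
    simp [oneX]
  rw [hRHS]
  by_cases hc : (1 + t) / 2 ≤ 1 / 2
  · have ht0 : t = 0 := le_antisymm (by linarith) h0
    subst ht0
    rw [hashAux, if_pos hc, show 2 * ((1 + 0) / 2) = (1:ℚ) by ring]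
    rw [hash_at_one, hash_at_one, hash_at_zero, hash_at_zero]
    ring
  · rw [hashAux, if_neg hc, show 2 * ((1 + t) / 2) - 1 = t by ring]
    rw [hash_at_one, hash_at_one,
      hash_apply _ _ ht n ((i:ℤ)) (by rw [hti]; push_cast; ring),
      hash_apply _ _ ht n ((i:ℤ)) (by rw [hti]; push_cast; ring)]
    try ring

/-- `T₀` as a linear map. -/
def T0L : X →ₗ[ℚ] X where
  toFun := T0
  map_add' := T0_add
  map_smul' := T0_smul

/-- `T₁` as a linear map. -/
def T1L : X →ₗ[ℚ] X where
  toFun := T1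
  map_add' := T1_add
  map_smul' := T1_smul

/-- `#` as a bilinear map. -/
def hashL : X →ₗ[ℚ] X →ₗ[ℚ] X :=
  LinearMap.mk₂ ℚ hash
    (fun a a' b => funext fun t => hashAux_add_left _ a a' b t.1)
    (fun c a b => funext fun t => hashAux_smul_left _ c a b t.1)
    (fun a b b' => funext fun t => hashAux_add_right _ a b b' t.1)
    (fun c a b => funext fun t => hashAux_smul_right _ c a b t.1)

lemma key_lemma (V1 V2 : Submodule ℚ X)
    (h1 : FiniteDimensional ℚ V1) (h2 : FiniteDimensional ℚ V2)
    (h10 : ∀ v ∈ V1, T0 v ∈ V1) (h11 : ∀ v ∈ V1, T1 v ∈ V1)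
    (h20 : ∀ v ∈ V2, T0 v ∈ V2) (h21 : ∀ v ∈ V2, T1 v ∈ V2) :
    FiniteDimensional ℚ
        (Submodule.span ℚ ({oneX} ∪ {x : X | ∃ α ∈ V1, ∃ β ∈ V2, x = hash α β})) ∧
      (∀ v ∈ Submodule.span ℚ ({oneX} ∪ {x : X | ∃ α ∈ V1, ∃ β ∈ V2, x = hash α β}),
        T0 v ∈ Submodule.span ℚ ({oneX} ∪ {x : X | ∃ α ∈ V1, ∃ β ∈ V2, x = hash α β})) ∧
      (∀ v ∈ Submodule.span ℚ ({oneX} ∪ {x : X | ∃ α ∈ V1, ∃ β ∈ V2, x = hash α β}),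
        T1 v ∈ Submodule.span ℚ ({oneX} ∪ {x : X | ∃ α ∈ V1, ∃ β ∈ V2, x = hash α β})) := by
  set S : Set X := {oneX} ∪ {x : X | ∃ α ∈ V1, ∃ β ∈ V2, x = hash α β} with hS
  refine ⟨?_, ?_, ?_⟩
  · -- finite dimensionality
    obtain ⟨s1, hs1⟩ := Module.Finite.iff_fg.mp h1
    obtain ⟨s2, hs2⟩ := Module.Finite.iff_fg.mp h2
    have hmap2 : Submodule.map₂ hashL V1 V2 =
        Submodule.span ℚ (Set.image2 (fun a b => hashL a b) (↑s1) (↑s2)) := by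
      rw [← hs1, ← hs2, Submodule.map₂_span_span]
    haveI hfd2 : FiniteDimensional ℚ (Submodule.map₂ hashL V1 V2) := by
      rw [hmap2]
      exact FiniteDimensional.span_of_finite ℚ (s1.finite_toSet.image2 _ s2.finite_toSet)
    haveI hfd1 : FiniteDimensional ℚ (Submodule.span ℚ ({oneX} : Set X)) :=
      FiniteDimensional.span_of_finite ℚ (Set.finite_singleton _)
    have hle : Submodule.span ℚ S ≤
        Submodule.span ℚ ({oneX} : Set X) ⊔ Submodule.map₂ hashL V1 V2 := by
      rw [Submodule.span_le]
      rintro x (hx | ⟨α, hα, β, hβ, rfl⟩)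
      · exact Submodule.mem_sup_left (Submodule.subset_span hx)
      · exact Submodule.mem_sup_right (Submodule.apply_mem_map₂ hashL hα hβ)
    exact Submodule.finiteDimensional_of_le hle
  · -- stability under T0
    intro v hv
    have h : Submodule.map T0L (Submodule.span ℚ S) ≤ Submodule.span ℚ S := by
      rw [Submodule.map_span, Submodule.span_le]
      rintro _ ⟨x, hx, rfl⟩
      rcases hx with rfl | ⟨α, hα, β, hβ, rfl⟩
      · show T0 oneX ∈ Submodule.span ℚ S
        rw [T0_oneX]
        exact Submodule.subset_span (Or.inl rfl)
      · show T0 (hash α β) ∈ Submodule.span ℚ S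
        rw [T0_hash]
        exact add_mem
          (Submodule.subset_span (Or.inr ⟨T0 α, h10 α hα, T0 β, h20 β hβ, rfl⟩))
          (Submodule.subset_span (Or.inr ⟨T1 α, h11 α hα, T1 β, h21 β hβ, rfl⟩))
    exact h ⟨v, hv, rfl⟩
  · -- stability under T1
    intro v hv
    have h : Submodule.map T1L (Submodule.span ℚ S) ≤ Submodule.span ℚ S := by
      rw [Submodule.map_span, Submodule.span_le]
      rintro _ ⟨x, hx, rfl⟩
      rcases hx with rfl | ⟨α, hα, β, hβ, rfl⟩
      · show T1 oneX ∈ Submodule.span ℚ S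
        rw [T1_oneX]
        exact Submodule.subset_span (Or.inl rfl)
      · show T1 (hash α β) ∈ Submodule.span ℚ S
        rw [T1_hash]
        refine add_mem (add_mem (Submodule.smul_mem _ _
            (Submodule.subset_span (Or.inl rfl))) ?_) ?_
        · exact Submodule.subset_span (Or.inr ⟨T0 α, h10 α hα, T1 β, h21 β hβ, rfl⟩)
        · exact Submodule.subset_span (Or.inr ⟨T1 α, h11 α hα, T0 β, h20 β hβ, rfl⟩)
    exact h ⟨v, hv, rfl⟩

/-- Remark after Theorem 3.3 (case `p = 2`): if `V₁, V₂` are finite-dimensional subspaces of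
`X` stable under `T₀` and `T₁`, then the span of `1` together with all `α # β` (`α ∈ V₁`,
`β ∈ V₂`) is finite dimensional and stable under `T₀` and `T₁`; in particular `α # β` lies in a
finite-dimensional stable subspace whenever `α` and `β` do. -/
theorem statement19 (V1 V2 : Submodule ℚ X)
    (h1 : FiniteDimensional ℚ V1) (h2 : FiniteDimensional ℚ V2)
    (h10 : ∀ v ∈ V1, T0 v ∈ V1) (h11 : ∀ v ∈ V1, T1 v ∈ V1)
    (h20 : ∀ v ∈ V2, T0 v ∈ V2) (h21 : ∀ v ∈ V2, T1 v ∈ V2) :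
    (∀ W : Submodule ℚ X,
      W = Submodule.span ℚ ({oneX} ∪ {x : X | ∃ α ∈ V1, ∃ β ∈ V2, x = hash α β}) →
      FiniteDimensional ℚ W ∧ (∀ v ∈ W, T0 v ∈ W) ∧ (∀ v ∈ W, T1 v ∈ W)) ∧
    (∀ α β : X,
      (∃ W : Submodule ℚ X, FiniteDimensional ℚ W ∧
        (∀ v ∈ W, T0 v ∈ W) ∧ (∀ v ∈ W, T1 v ∈ W) ∧ α ∈ W) →
      (∃ W : Submodule ℚ X, FiniteDimensional ℚ W ∧
        (∀ v ∈ W, T0 v ∈ W) ∧ (∀ v ∈ W, T1 v ∈ W) ∧ β ∈ W) →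
      ∃ W : Submodule ℚ X, FiniteDimensional ℚ W ∧
        (∀ v ∈ W, T0 v ∈ W) ∧ (∀ v ∈ W, T1 v ∈ W) ∧ hash α β ∈ W) := by
  constructor
  · intro W hW
    subst hW
    exact key_lemma V1 V2 h1 h2 h10 h11 h20 h21
  · rintro α β ⟨W1, hf1, hs10, hs11, hα⟩ ⟨W2, hf2, hs20, hs21, hβ⟩
    obtain ⟨kf, k0, k1⟩ := key_lemma W1 W2 hf1 hf2 hs10 hs11 hs20 hs21
    exact ⟨_, kf, k0, k1,
      Submodule.subset_span (Or.inr ⟨α, hα, β, hβ, rfl⟩)⟩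

end
end
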